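/- Let M be the n×n matrix with M(1,1)=n-1, M(1,j)=M(j,1)=-1 for j≥2, diagonal entries M(j,j) ∈ {1,3} for j≥2 with exactly r-1 of them equal to 1 (so n-r-1 equal to 3, where 2 ≤ r ≤ n-1), and all other entries 0. Then the characteristic polynomial of M is [λ³ - (n+3)λ² + 3nλ + 2r - 2n]·(λ-1)^(r-2)·(λ-3)^(n-r-1). -/

import Mathlib

open Polynomial

/-- Splitting `Fin (m+1)` as `Unit ⊕ Fin m`. -/
def arrowEquivAux (m : ℕ) : Unit ⊕ Fin m ≃ Fin (m + 1) where
  toFun := Sum.elim (fun _ => 0) Fin.succ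
  invFun := fun k => Fin.cases (Sum.inl ()) Sum.inr k
  left_inv := by rintro (⟨⟩ | j) <;> simp
  right_inv := by
    intro k
    induction k using Fin.cases <;> simp

theorem charpoly_LS_case1 (n r : ℕ) (hn : 3 ≤ n) (hr : 2 ≤ r) (hrn : r ≤ n - 1)
    (d : Fin n → ℝ)
    (hd : ∀ j : Fin n, j.val ≠ 0 → d j = 1 ∨ d j = 3)
    (hcard : (Finset.univ.filter (fun j : Fin n => j.val ≠ 0 ∧ d j = 1)).card = r - 1)
    (M : Matrix (Fin n) (Fin n) ℝ)
    (hM : M = Matrix.of fun i j =>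
      if i = j then (if i.val = 0 then (n : ℝ) - 1 else d i)
      else if i.val = 0 ∨ j.val = 0 then -1 else 0) :
    M.charpoly =
      (X ^ 3 - C ((n : ℝ) + 3) * X ^ 2 + C (3 * (n : ℝ)) * X + C (2 * (r : ℝ) - 2 * n)) *
        (X - 1) ^ (r - 2) * (X - 3) ^ (n - r - 1) := by
  classical
  subst hM
  obtain ⟨m, rfl⟩ : ∃ m, n = m + 1 := ⟨n - 1, by omega⟩
  set K := RatFunc ℝ with hK
  have φinj : Function.Injective (algebraMap ℝ[X] K) := IsFractionRing.injective ℝ[X] K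
  apply φinj
  set φ : ℝ[X] →+* K := (algebraMap ℝ[X] K : ℝ[X] →+* K) with hφ
  set ψ : ℝ →+* K := φ.comp (Polynomial.C : ℝ →+* ℝ[X]) with hψ
  have hφC : ∀ x : ℝ, φ (C x) = ψ x := fun _ => rfl
  set t : K := φ X with ht
  set M := (Matrix.of fun i j : Fin (m+1) =>
      if i = j then (if i.val = 0 then ((m+1 : ℕ) : ℝ) - 1 else d i)
      else if i.val = 0 ∨ j.val = 0 then -1 else 0) with hMdef
  set w : Fin m → K := fun j => t - ψ (d j.succ) with hw
  have htC : ∀ x : ℝ, t - ψ x ≠ 0 := by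
    intro x h
    have h2 : φ (X - C x) = 0 := by rw [map_sub, hφC]; exact h
    exact Polynomial.X_sub_C_ne_zero x (φinj (h2.trans (map_zero φ).symm))
  have ht1 : t - 1 ≠ 0 := by simpa using htC 1
  have ht3 : t - 3 ≠ 0 := by
    have := htC 3
    rwa [map_ofNat] at this
  have hwne : ∀ j, w j ≠ 0 := fun j => htC (d j.succ)
  set A : Matrix Unit Unit K := Matrix.of fun _ _ => t - ψ (((m+1 : ℕ) : ℝ) - 1) with hA
  set B : Matrix Unit (Fin m) K := Matrix.of fun _ _ => (1 : K) with hB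
  set Cm : Matrix (Fin m) Unit K := Matrix.of fun _ _ => (1 : K) with hCm
  set D : Matrix (Fin m) (Fin m) K := Matrix.diagonal w with hD
  have hsub : ((M.charmatrix).map φ).submatrix (arrowEquivAux m) (arrowEquivAux m)
      = Matrix.fromBlocks A B Cm D := by
    ext i j
    rcases i with i | i <;> rcases j with j | j <;>
      simp only [Matrix.submatrix_apply, arrowEquivAux, Equiv.coe_fn_mk, Sum.elim_inl,
        Sum.elim_inr, Matrix.fromBlocks_apply₁₁, Matrix.fromBlocks_apply₁₂,
        Matrix.fromBlocks_apply₂₁, Matrix.fromBlocks_apply₂₂, Matrix.map_apply]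
    · rw [Matrix.charmatrix_apply_eq]
      simp [hA, hMdef, hφC, ht, map_sub]
    · have hne : (0 : Fin (m+1)) ≠ j.succ := (Fin.succ_ne_zero j).symm
      rw [Matrix.charmatrix_apply_ne _ _ _ hne]
      simp [hB, hMdef, hne, map_neg]
    · have hne : i.succ ≠ (0 : Fin (m+1)) := Fin.succ_ne_zero i
      rw [Matrix.charmatrix_apply_ne _ _ _ hne]
      simp [hCm, hMdef, hne, map_neg]
    · rcases eq_or_ne i j with rfl | hij
      · rw [Matrix.charmatrix_apply_eq]
        simp [hD, hMdef, Fin.val_succ, hw, hφC, ht, map_sub]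
      · have hne : i.succ ≠ j.succ := fun h => hij (Fin.succ_injective m h)
        rw [Matrix.charmatrix_apply_ne _ _ _ hne]
        simp [hD, hMdef, hne, Fin.val_succ, Matrix.diagonal_apply_ne _ hij]
  have hDunit : IsUnit D.det := by
    rw [hD, Matrix.det_diagonal]
    exact (Finset.prod_ne_zero_iff.mpr fun j _ => hwne j).isUnit
  have : Invertible D := D.invertibleOfIsUnitDet hDunit
  have hinvD : ⅟D = Matrix.diagonal fun j => (w j)⁻¹ := by
    apply invOf_eq_right_inv
    rw [hD, Matrix.diagonal_mul_diagonal]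
    have : (fun j => w j * (w j)⁻¹) = fun _ => (1 : K) := funext fun j => mul_inv_cancel₀ (hwne j)
    rw [this, Matrix.diagonal_one]
  have hdet : φ M.charpoly = (∏ j, w j) * (A () () - ∑ j, (w j)⁻¹) := by
    rw [Matrix.charpoly, RingHom.map_det]
    simp only [RingHom.mapMatrix_apply]
    rw [← Matrix.det_submatrix_equiv_self (arrowEquivAux m), hsub, Matrix.det_fromBlocks₂₂,
      hinvD]
    rw [hD, Matrix.det_diagonal]
    congr 1
    rw [Matrix.det_unique]
    simp [Matrix.mul_apply, hB, hCm, Matrix.diagonal_apply, Finset.sum_ite_eq]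
  -- cardinalities
  set S : Finset (Fin m) := Finset.univ.filter (fun j => d j.succ = 1) with hSdef
  have hS : S.card = r - 1 := by
    rw [← hcard]
    apply Finset.card_bij (fun j _ => j.succ)
    · intro a ha
      simp only [hSdef, Finset.mem_filter, Finset.mem_univ, true_and] at ha
      simp [Fin.val_succ, ha]
    · intro a _ b _ h
      exact Fin.succ_injective m h
    · intro k hk
      simp only [Finset.mem_filter, Finset.mem_univ, true_and] at hk
      obtain ⟨hk0, hk1⟩ := hk
      have hkne : k ≠ 0 := fun h => hk0 (by rw [h]; rfl)
      refine ⟨k.pred hkne, ?_, by simp⟩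
      simp [hSdef, hk1]
  have hSc : (Finset.univ.filter (fun j : Fin m => ¬ d j.succ = 1)).card = m - (r - 1) := by
    have h := Finset.card_filter_add_card_filter_not (s := (Finset.univ : Finset (Fin m)))
      (p := fun j => d j.succ = 1)
    simp only [Finset.card_univ, Fintype.card_fin, ← hSdef] at h
    omega
  have hone : ∀ j ∈ S, w j = t - 1 := by
    intro j hj
    simp only [hSdef, Finset.mem_filter] at hj
    simp [hw, hj.2]
  have hthree : ∀ j ∈ Finset.univ.filter (fun j : Fin m => ¬ d j.succ = 1), w j = t - 3 := by
    intro j hj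
    simp only [Finset.mem_filter] at hj
    have h3 := (hd j.succ (by simp [Fin.val_succ])).resolve_left hj.2
    rw [hw]
    simp only [h3, map_ofNat]
  have hprod : ∏ j, w j = (t - 1) ^ (r - 1) * (t - 3) ^ (m - (r - 1)) := by
    rw [← Finset.prod_filter_mul_prod_filter_not Finset.univ (fun j => d j.succ = 1), ← hSdef,
      Finset.prod_congr rfl hone, Finset.prod_congr rfl hthree, Finset.prod_const,
      Finset.prod_const, hS, hSc]
  have hsum : ∑ j, (w j)⁻¹ = ((r - 1 : ℕ)) * (t - 1)⁻¹ + ((m - (r - 1) : ℕ)) * (t - 3)⁻¹ := by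
    rw [← Finset.sum_filter_add_sum_filter_not Finset.univ (fun j => d j.succ = 1), ← hSdef]
    have h1 : ∑ j ∈ S, (w j)⁻¹ = S.card • (t - 1)⁻¹ := by
      rw [← Finset.sum_const]
      exact Finset.sum_congr rfl fun j hj => by rw [hone j hj]
    have h2 : ∑ j ∈ Finset.univ.filter (fun j : Fin m => ¬ d j.succ = 1), (w j)⁻¹
        = (Finset.univ.filter (fun j : Fin m => ¬ d j.succ = 1)).card • (t - 3)⁻¹ := by
      rw [← Finset.sum_const]
      exact Finset.sum_congr rfl fun j hj => by rw [hthree j hj]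
    rw [h1, h2, hS, hSc, nsmul_eq_mul, nsmul_eq_mul]
  rw [hdet, hprod, hsum]
  obtain ⟨a, rfl⟩ : ∃ a, r = a + 2 := ⟨r - 2, by omega⟩
  obtain ⟨b, rfl⟩ : ∃ b, m = a + b + 2 := ⟨m - a - 2, by omega⟩
  have e1 : a + 2 - 1 = a + 1 := by omega
  have e2 : a + b + 2 - (a + 1) = b + 1 := by omega
  have e3 : a + 2 - 2 = a := by omega
  have e4 : a + b + 2 + 1 - (a + 2) - 1 = b := by omega
  rw [e1, e2, e3, e4]
  simp only [map_mul, map_sub, map_add, map_pow, map_one, map_ofNat, hφC, map_natCast, ← ht,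
    hA, Matrix.of_apply]
  push_cast
  linear_combination (-(t - 1) ^ a * (t - 3) ^ (b + 1) * ((a : K) + 1)) * mul_inv_cancel₀ ht1
    + (-(t - 1) ^ (a + 1) * (t - 3) ^ b * ((b : K) + 1)) * mul_inv_cancel₀ ht3
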